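/- arXiv:1108.3679 — 4 statements merged into one kernel-verified Lean document; each statement's English description precedes it below -/
import Mathlib

section
/- For every natural number n ≥ 1 and θ in (0, π), ∫_θ^{π/2} dx/sin^{2n+1}(x) = ((2n-1)!!/(2n)!!) [ log(cot(θ/2)) + cos(θ) Σ_{k=1}^{n} ((2k-2)!!/(2k-1)!!) · 1/sin^{2k}(θ) ]. -/
open Real Nat


lemma deriv_aux (j : ℕ) {x : ℝ} (hx : Real.sin x ≠ 0) :
    HasDerivAt (fun y => -Real.cos y / (((j:ℝ)+1) * Real.sin y ^ (j+1)))
      (1 / Real.sin x ^ (j+2) - ((j:ℝ)/((j:ℝ)+1)) * (1 / Real.sin x ^ j)) x := by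
  have hj : ((j:ℝ)+1) ≠ 0 := by positivity
  have hs : Real.sin x ^ (j+1) ≠ 0 := pow_ne_zero _ hx
  have h1 : HasDerivAt (fun y => Real.sin y ^ (j+1))
      ((j+1 : ℕ) * Real.sin x ^ j * Real.cos x) x := by
    simpa using (Real.hasDerivAt_sin x).fun_pow (j+1)
  have h2 : HasDerivAt (fun y => ((j:ℝ)+1) * Real.sin y ^ (j+1))
      (((j:ℝ)+1) * ((j+1 : ℕ) * Real.sin x ^ j * Real.cos x)) x := h1.const_mul _
  have h3 : HasDerivAt (fun y => -Real.cos y) (Real.sin x) x := by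
    simpa using (Real.hasDerivAt_cos x).fun_neg
  have h4 := h3.fun_div h2 (mul_ne_zero hj hs)
  refine h4.congr_deriv (Eq.symm ?_)
  have hc : Real.cos x ^ 2 = 1 - Real.sin x ^ 2 := by
    nlinarith [Real.sin_sq_add_cos_sq x]
  have hsj : Real.sin x ^ j ≠ 0 := pow_ne_zero _ hx
  have e1 : Real.sin x ^ (j+2) = Real.sin x ^ j * Real.sin x ^ 2 := by ring
  have e2 : Real.sin x ^ (j+1) = Real.sin x ^ j * Real.sin x := by ring
  push_cast
  rw [e1, e2]
  generalize hg : Real.sin x ^ j = s at hsj ⊢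
  field_simp
  ring_nf
  rw [hc]
  ring


lemma sinPosAux {θ : ℝ} (hθ : θ ∈ Set.Ioo 0 π) {x : ℝ} (hx : x ∈ Set.uIcc θ (π/2)) :
    0 < Real.sin x := by
  apply Real.sin_pos_of_pos_of_lt_pi
  · exact lt_of_lt_of_le (lt_min hθ.1 (by positivity)) hx.1
  · exact lt_of_le_of_lt hx.2 (max_lt hθ.2 (by linarith [Real.pi_pos]))

lemma integrableAux {θ : ℝ} (hθ : θ ∈ Set.Ioo 0 π) (m : ℕ) :
    IntervalIntegrable (fun x => 1 / Real.sin x ^ m) MeasureTheory.volume θ (π/2) := by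
  apply ContinuousOn.intervalIntegrable
  apply ContinuousOn.div continuousOn_const (Real.continuous_sin.continuousOn.pow m)
  intro x hx
  exact pow_ne_zero _ (ne_of_gt (sinPosAux hθ hx))



lemma reduction (j : ℕ) {θ : ℝ} (hθ : θ ∈ Set.Ioo 0 π) :
    ∫ x in θ..(π/2), 1 / Real.sin x ^ (j+2) =
      ((j:ℝ)/((j:ℝ)+1)) * (∫ x in θ..(π/2), 1 / Real.sin x ^ j)
        + Real.cos θ / (((j:ℝ)+1) * Real.sin θ ^ (j+1)) := by
  have key : ∫ x in θ..(π/2),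
      (1 / Real.sin x ^ (j+2) - ((j:ℝ)/((j:ℝ)+1)) * (1 / Real.sin x ^ j)) =
      Real.cos θ / (((j:ℝ)+1) * Real.sin θ ^ (j+1)) := by
    rw [intervalIntegral.integral_eq_sub_of_hasDerivAt
      (fun x hx => deriv_aux j (ne_of_gt (sinPosAux hθ hx)))
      (((integrableAux hθ (j+2)).sub ((integrableAux hθ j).const_mul _)))]
    simp [Real.sin_pi_div_two, Real.cos_pi_div_two]
    ring
  rw [intervalIntegral.integral_sub (integrableAux hθ (j+2))
    ((integrableAux hθ j).const_mul _), intervalIntegral.integral_const_mul] at key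
  linarith [key]

lemma baseI {θ : ℝ} (hθ : θ ∈ Set.Ioo 0 π) :
    ∫ x in θ..(π/2), 1 / Real.sin x ^ 1 = Real.log (Real.cot (θ/2)) := by
  have hderiv : ∀ x ∈ Set.uIcc θ (π/2),
      HasDerivAt (fun y => Real.log (Real.tan (y/2))) (1 / Real.sin x ^ 1) x := by
    intro x hx
    have hx0 : 0 < x := lt_of_lt_of_le (lt_min hθ.1 (by positivity)) hx.1
    have hxpi : x < π := lt_of_le_of_lt hx.2 (max_lt hθ.2 (by linarith [Real.pi_pos]))
    have hcos : 0 < Real.cos (x/2) :=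
      Real.cos_pos_of_mem_Ioo ⟨by linarith [Real.pi_pos], by linarith⟩
    have hsin : 0 < Real.sin (x/2) :=
      Real.sin_pos_of_pos_of_lt_pi (by linarith) (by linarith [Real.pi_pos])
    have htan : 0 < Real.tan (x/2) := by
      rw [Real.tan_eq_sin_div_cos]; positivity
    have h1 : HasDerivAt (fun y : ℝ => y/2) (1/2 : ℝ) x := (hasDerivAt_id x).div_const 2
    have h2 : HasDerivAt Real.tan (1 / Real.cos (x/2) ^ 2) (x/2) := by
      simpa using Real.hasDerivAt_tan (ne_of_gt hcos)
    have h3 : HasDerivAt (fun y => Real.tan (y/2)) (1 / Real.cos (x/2) ^ 2 * (1/2)) x :=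
      by have := h2.comp x h1; exact this
    have h4 := (Real.hasDerivAt_log (ne_of_gt htan)).comp x h3
    refine h4.congr_deriv (Eq.symm ?_)
    have hs : Real.sin x = 2 * Real.sin (x/2) * Real.cos (x/2) := by
      rw [show x = 2 * (x/2) by ring, Real.sin_two_mul]; ring_nf
    rw [hs, Real.tan_eq_sin_div_cos]
    field_simp
  rw [intervalIntegral.integral_eq_sub_of_hasDerivAt hderiv (integrableAux hθ 1)]
  have : Real.tan (π/2/2) = 1 := by
    rw [show π/2/2 = π/4 by ring, Real.tan_pi_div_four]
  rw [this, Real.log_one]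
  have hcos : 0 < Real.cos (θ/2) :=
    Real.cos_pos_of_mem_Ioo ⟨by linarith [Real.pi_pos, hθ.1], by linarith [hθ.2]⟩
  have hsin : 0 < Real.sin (θ/2) :=
    Real.sin_pos_of_pos_of_lt_pi (by linarith [hθ.1]) (by linarith [Real.pi_pos, hθ.2])
  have hcot : Real.cot (θ/2) = (Real.tan (θ/2))⁻¹ := by
    rw [Real.cot_eq_cos_div_sin, Real.tan_eq_sin_div_cos, inv_div]
  rw [hcot, Real.log_inv]
  ring






theorem integral_one_div_sin_odd_pow (n : ℕ) (hn : 1 ≤ n) (θ : ℝ) (hθ : θ ∈ Set.Ioo 0 π) :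
    ∫ x in θ..(π / 2), 1 / Real.sin x ^ (2 * n + 1) =
      (((2 * n - 1)‼ : ℝ) / ((2 * n)‼ : ℝ)) *
        (Real.log (Real.cot (θ / 2)) +
          Real.cos θ * ∑ k ∈ Finset.Icc 1 n,
            (((2 * k - 2)‼ : ℝ) / ((2 * k - 1)‼ : ℝ)) * (1 / Real.sin θ ^ (2 * k))) := by
  have hsθ : Real.sin θ ≠ 0 :=
    ne_of_gt (Real.sin_pos_of_pos_of_lt_pi hθ.1 hθ.2)
  induction n, hn using Nat.le_induction with
  | base =>
    have h := reduction 1 hθ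
    rw [show (2*1+1) = 1+2 from rfl, h, baseI hθ]
    norm_num [Nat.doubleFactorial]
    ring
  | succ n hn ih =>
    have hred := reduction (2*n+1) hθ
    rw [show 2*(n+1)+1 = (2*n+1)+2 by ring, hred,
      show (2*n+1)+1 = 2*n+2 by ring, ih]
    rw [Finset.sum_Icc_succ_top (by omega : 1 ≤ n+1)]
    have hd1 : ((2*(n+1)-1)‼ : ℝ) = (2*n+1) * ((2*n-1)‼ : ℝ) := by
      rw [show 2*(n+1)-1 = (2*n-1)+2 by omega, Nat.doubleFactorial_add_two]
      push_cast [show 2*n-1+2 = 2*n+1 by omega]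
      ring
    have hd2 : ((2*(n+1))‼ : ℝ) = (2*n+2) * ((2*n)‼ : ℝ) := by
      rw [show 2*(n+1) = (2*n)+2 by ring, Nat.doubleFactorial_add_two]
      push_cast; ring
    have hd3 : ((2*(n+1)-2)‼ : ℝ) = ((2*n)‼ : ℝ) := by
      norm_num [show 2*(n+1)-2 = 2*n by omega]
    have hd4 : ((2*(n+1)-1)‼ : ℝ) = (2*n+1) * ((2*n-1)‼ : ℝ) := hd1
    have hpos1 : ((2*n-1)‼ : ℝ) ≠ 0 := by
      exact_mod_cast Nat.cast_ne_zero.mpr (Nat.doubleFactorial_pos _).ne'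
    have hpos2 : ((2*n)‼ : ℝ) ≠ 0 := by
      exact_mod_cast Nat.cast_ne_zero.mpr (Nat.doubleFactorial_pos _).ne'
    rw [hd1, hd2, hd3]
    have hsp : Real.sin θ ^ (2*(n+1)) ≠ 0 := pow_ne_zero _ hsθ
    rw [show 2*(n+1) = 2*n+2 by ring] at hsp ⊢
    push_cast
    field_simp
    ring
end

section
/- For every natural number n ≥ 1 and θ in (0, π), ∫_θ^{π/2} dx/sin^{2n}(x) = (n-1)! Σ_{k=1}^{n} cot^{2k-1}(θ) / ((2k-1)·(k-1)!·(n-k)!). -/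
open Real Nat

lemma hasDerivAt_cot' {x : ℝ} (hx : Real.sin x ≠ 0) :
    HasDerivAt Real.cot (-(1 / Real.sin x ^ 2)) x := by
  have hfun : Real.cot = fun y => Real.cos y / Real.sin y :=
    funext fun y => Real.cot_eq_cos_div_sin y
  have h : HasDerivAt (fun y => Real.cos y / Real.sin y)
      ((-Real.sin x * Real.sin x - Real.cos x * Real.cos x) / Real.sin x ^ 2) x :=
    (Real.hasDerivAt_cos x).div (Real.hasDerivAt_sin x) hx
  have h1 : (-Real.sin x * Real.sin x - Real.cos x * Real.cos x) / Real.sin x ^ 2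
      = -(1 / Real.sin x ^ 2) := by
    have := Real.sin_sq_add_cos_sq x
    field_simp
    nlinarith [Real.sin_sq_add_cos_sq x]
  rw [hfun]
  rw [h1] at h
  exact h

lemma key_deriv {x : ℝ} (hx : Real.sin x ≠ 0) (m : ℕ) :
    HasDerivAt (fun y => -∑ j ∈ Finset.range (m+1),
        ((m.choose j : ℕ) : ℝ) * Real.cot y ^ (2*j+1) / (2*(j:ℝ)+1))
      (1 / Real.sin x ^ (2*(m+1))) x := by
  have h := (HasDerivAt.fun_sum (u := Finset.range (m+1))
    (fun j _ => ((((hasDerivAt_cot' hx).pow (2*j+1)).const_mul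
      ((m.choose j : ℕ) : ℝ)).div_const (2*(j:ℝ)+1)))).fun_neg
  refine h.congr_deriv (Eq.symm ?_)
  have hcot : Real.cot x ^ 2 + 1 = 1 / Real.sin x ^ 2 := by
    rw [Real.cot_eq_cos_div_sin]
    field_simp
    exact Real.cos_sq_add_sin_sq x
  have hterm : ∀ j ∈ Finset.range (m+1),
      ((m.choose j : ℕ) : ℝ) * (((2*j+1 : ℕ) : ℝ) * Real.cot x ^ (2*j+1-1)
        * (-(1 / Real.sin x ^ 2))) / (2*(j:ℝ)+1)
      = -(Real.cot x ^ (2*j) * ((m.choose j : ℕ) : ℝ) * (1 / Real.sin x ^ 2)) := by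
    intro j _
    have h2 : (2*(j:ℝ)+1) ≠ 0 := by positivity
    have he : 2*j+1-1 = 2*j := by omega
    rw [he]
    push_cast
    field_simp
  rw [Finset.sum_congr rfl hterm]
  rw [Finset.sum_neg_distrib, neg_neg, ← Finset.sum_mul]
  have expand : ∑ j ∈ Finset.range (m+1), Real.cot x ^ (2*j) * ((m.choose j : ℕ) : ℝ)
      = (Real.cot x ^ 2 + 1) ^ m := by
    rw [add_pow]
    refine Finset.sum_congr rfl fun j _ => ?_
    rw [one_pow, mul_one, ← pow_mul]
  rw [expand, hcot, ← pow_succ, div_pow, one_pow, ← pow_mul]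

theorem integral_one_div_sin_even_pow_cot (n : ℕ) (hn : 1 ≤ n) (θ : ℝ) (hθ : θ ∈ Set.Ioo 0 π) :
    ∫ x in θ..(π / 2), 1 / Real.sin x ^ (2 * n) =
      ((n - 1)! : ℝ) * ∑ k ∈ Finset.Icc 1 n,
        Real.cot θ ^ (2 * k - 1) / ((2 * k - 1 : ℝ) * ((k - 1)! : ℝ) * ((n - k)! : ℝ)) := by
  obtain ⟨hθ0, hθπ⟩ := hθ
  obtain ⟨m, rfl⟩ : ∃ m, n = m + 1 := ⟨n - 1, (Nat.succ_pred_eq_of_pos hn).symm⟩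
  have hπ2 : (0:ℝ) < π/2 := by positivity
  have hsub : Set.uIcc θ (π/2) ⊆ Set.Ioo 0 π :=
    Set.OrdConnected.uIcc_subset Set.ordConnected_Ioo ⟨hθ0, hθπ⟩
      ⟨hπ2, by linarith [Real.pi_pos]⟩
  have hsin : ∀ x ∈ Set.uIcc θ (π/2), Real.sin x ≠ 0 := fun x hx =>
    ne_of_gt (Real.sin_pos_of_pos_of_lt_pi (hsub hx).1 (hsub hx).2)
  have hcont : IntervalIntegrable (fun x => 1 / Real.sin x ^ (2*(m+1)))
      MeasureTheory.volume θ (π/2) := by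
    apply ContinuousOn.intervalIntegrable
    exact ContinuousOn.div continuousOn_const
      ((Real.continuous_sin.continuousOn).pow _)
      (fun x hx => pow_ne_zero _ (hsin x hx))
  have hint := intervalIntegral.integral_eq_sub_of_hasDerivAt
    (f := fun y => -∑ j ∈ Finset.range (m+1),
        ((m.choose j : ℕ) : ℝ) * Real.cot y ^ (2*j+1) / (2*(j:ℝ)+1))
    (fun x hx => key_deriv (hsin x hx) m) hcont
  rw [hint]
  have hcotpi : Real.cot (π/2) = 0 := by
    rw [Real.cot_eq_cos_div_sin, Real.cos_pi_div_two, zero_div]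
  have hzero : (fun y => -∑ j ∈ Finset.range (m+1),
      ((m.choose j : ℕ) : ℝ) * Real.cot y ^ (2*j+1) / (2*(j:ℝ)+1)) (π/2) = 0 := by
    simp [hcotpi]
  rw [show (-∑ j ∈ Finset.range (m+1), ((m.choose j : ℕ) : ℝ) * Real.cot (π/2) ^ (2*j+1) / (2*(j:ℝ)+1)) = 0 from hzero]
  simp only [zero_sub, neg_neg]
  rw [show Finset.Icc 1 (m+1) = Finset.Ico 1 (m+2) from (Finset.Ico_add_one_right_eq_Icc 1 (m+1)).symm,
    Finset.sum_Ico_eq_sum_range]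
  simp only [show m + 2 - 1 = m + 1 from rfl]
  rw [Finset.mul_sum]
  refine Finset.sum_congr rfl fun j hj => ?_
  have hjm : j ≤ m := Nat.lt_succ_iff.mp (Finset.mem_range.mp hj)
  have he1 : 2*(1+j)-1 = 2*j+1 := by omega
  have he2 : 1+j-1 = j := by omega
  have he3 : m+1-(1+j) = m-j := by omega
  rw [he1, he2, he3, Nat.cast_choose ℝ hjm]
  have hfj : (j ! : ℝ) ≠ 0 := Nat.cast_ne_zero.mpr (Nat.factorial_ne_zero j)
  have hfmj : ((m-j)! : ℝ) ≠ 0 := Nat.cast_ne_zero.mpr (Nat.factorial_ne_zero (m-j))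
  have hd : (2*((1:ℕ)+j : ℕ) - 1 : ℝ) = 2*(j:ℝ)+1 := by push_cast; ring
  rw [hd]
  have h2j : 2*(j:ℝ)+1 ≠ 0 := by positivity
  field_simp
  rw [Nat.add_sub_cancel]
  ring
end

section
/- The two finite-sum expressions for the even-order integral agree: for every n ≥ 1 and θ in (0, π), ((2n-2)!!/(2n-1)!!) cos(θ) Σ_{k=1}^{n} ((2k-3)!!/(2k-2)!!) / sin^{2k-1}(θ) = (n-1)! Σ_{k=1}^{n} cot^{2k-1}(θ) / ((2k-1)·(k-1)!·(n-k)!). -/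
open Real Nat

private lemma binom_expand (n : ℕ) (t : ℝ) :
    (1 + t ^ 2) ^ n = ∑ k ∈ Finset.Icc 1 (n + 1), (n.choose (k - 1) : ℝ) * (t ^ 2) ^ (k - 1) := by
  rw [show Finset.Icc 1 (n + 1) = Finset.Ico 1 (n + 2) by rfl, Finset.sum_Ico_eq_sum_range]
  simp only [Nat.add_sub_cancel_left, Nat.add_sub_cancel]
  rw [add_comm (1 : ℝ), add_pow]
  simp [mul_comm]

set_option maxHeartbeats 1000000 in
private lemma key (t : ℝ) (n : ℕ) (hn : 1 ≤ n) :
    (((2 * n - 2)‼ : ℝ) / ((2 * n - 1)‼ : ℝ)) *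
        ∑ k ∈ Finset.Icc 1 n, (((2 * k - 3)‼ : ℝ) / ((2 * k - 2)‼ : ℝ)) * (1 + t ^ 2) ^ (k - 1)
      = ((n - 1)! : ℝ) * ∑ k ∈ Finset.Icc 1 n,
          (t ^ 2) ^ (k - 1) / ((2 * k - 1 : ℝ) * ((k - 1)! : ℝ) * ((n - k)! : ℝ)) := by
  induction n, hn using Nat.le_induction with
  | base => norm_num
  | succ n hn ih =>
    rw [Finset.sum_Icc_succ_top (by omega), Finset.sum_Icc_succ_top (by omega)]
    have e1 : 2 * (n + 1) - 2 = 2 * n := by omega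
    have e2 : 2 * (n + 1) - 1 = 2 * n - 1 + 2 := by omega
    have e3 : 2 * (n + 1) - 3 = 2 * n - 1 := by omega
    have e4 : 2 * n = 2 * n - 2 + 2 := by omega
    have e5 : n + 1 - 1 = n := by omega
    have e6 : n + 1 - (n + 1) = 0 := by omega
    rw [e1, e2, e3, e5, e6]
    have hD1 : ((2 * n - 2)‼ : ℝ) ≠ 0 := by positivity
    have hD2 : ((2 * n - 1)‼ : ℝ) ≠ 0 := by positivity
    have hc1 : ((2 * n - 1 : ℕ) : ℝ) = 2 * (n : ℝ) - 1 := by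
      push_cast [Nat.cast_sub (show 1 ≤ 2 * n by omega)]
      ring
    have hc2 : ((2 * n - 2 : ℕ) : ℝ) = 2 * (n : ℝ) - 2 := by
      push_cast [Nat.cast_sub (show 2 ≤ 2 * n by omega)]
      ring
    have hfac : ((2 * n - 1 + 2)‼ : ℝ) = (2 * n + 1) * ((2 * n - 1)‼ : ℝ) := by
      rw [Nat.doubleFactorial_add_two]
      push_cast [hc1]
      ring
    have hfac2 : ((2 * n)‼ : ℝ) = (2 * n) * ((2 * n - 2)‼ : ℝ) := by
      rw [e4, Nat.doubleFactorial_add_two]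
      push_cast [hc2]
      ring
    have hnfac : ((n)! : ℝ) = n * ((n - 1)! : ℝ) := by
      rw [show n = n - 1 + 1 by omega, Nat.factorial_succ]
      push_cast [show (1:ℕ) ≤ n by omega]
      ring
    -- The key recurrence: (2n+1) * n! * T' = 2n * (n-1)! * T + ∑ choose terms
    have hrec : (2 * n + 1 : ℝ) * ((n)! : ℝ) *
          (∑ k ∈ Finset.Icc 1 n,
            (t ^ 2) ^ (k - 1) / ((2 * k - 1 : ℝ) * ((k - 1)! : ℝ) * ((n + 1 - k)! : ℝ)))
        = (2 * n : ℝ) * ((n - 1)! : ℝ) *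
          (∑ k ∈ Finset.Icc 1 n,
            (t ^ 2) ^ (k - 1) / ((2 * k - 1 : ℝ) * ((k - 1)! : ℝ) * ((n - k)! : ℝ)))
          + ∑ k ∈ Finset.Icc 1 n, (n.choose (k - 1) : ℝ) * (t ^ 2) ^ (k - 1) := by
      rw [Finset.mul_sum, Finset.mul_sum, ← Finset.sum_add_distrib]
      refine Finset.sum_congr rfl fun k hk => ?_
      simp only [Finset.mem_Icc] at hk
      obtain ⟨hk1, hk2⟩ := hk
      have h1 : ((n + 1 - k)! : ℝ) = (n + 1 - k : ℕ) * ((n - k)! : ℝ) := by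
        rw [show n + 1 - k = (n - k) + 1 by omega, Nat.factorial_succ]
        push_cast
        ring
      have hch : (n.choose (k - 1) : ℝ) = ((n)! : ℝ) / (((k - 1)! : ℝ) * ((n + 1 - k)! : ℝ)) := by
        rw [Nat.cast_choose ℝ (by omega : k - 1 ≤ n), show n - (k - 1) = n + 1 - k by omega]
      have hknat : ((n + 1 - k : ℕ) : ℝ) = (n : ℝ) + 1 - (k : ℝ) := by
        push_cast [show k ≤ n + 1 by omega]
        ring
      have h2k : (2 * (k : ℝ) - 1) ≠ 0 := by
        have : (1 : ℝ) ≤ (k : ℝ) := by exact_mod_cast hk1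
        nlinarith
      have hfk : ((k - 1)! : ℝ) ≠ 0 := by positivity
      have hfnk : ((n - k)! : ℝ) ≠ 0 := by positivity
      have hnk : ((n : ℝ) + 1 - (k : ℝ)) ≠ 0 := by
        have : (k : ℝ) ≤ (n : ℝ) := by exact_mod_cast hk2
        nlinarith
      rw [hch, h1, hknat, hnfac]
      field_simp
      ring
    -- rewrite (1+t^2)^n via binomial
    have hbin := binom_expand n t
    rw [Finset.sum_Icc_succ_top (by omega)] at hbin
    simp only [e5, e6, Nat.choose_self, Nat.cast_one, one_mul] at hbin ⊢
    -- Now solve the field equation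
    have h2n1 : (2 * (n : ℝ) + 1) ≠ 0 := by positivity
    have hfacn : ((n)! : ℝ) ≠ 0 := by positivity
    have h2k1 : (2 * ((n : ℝ) + 1) - 1) = 2 * n + 1 := by ring
    set S := ∑ k ∈ Finset.Icc 1 n, (((2 * k - 3)‼ : ℝ) / ((2 * k - 2)‼ : ℝ)) * (1 + t ^ 2) ^ (k - 1) with hS
    set T := ∑ k ∈ Finset.Icc 1 n,
      (t ^ 2) ^ (k - 1) / ((2 * k - 1 : ℝ) * ((k - 1)! : ℝ) * ((n - k)! : ℝ)) with hT
    set T' := ∑ k ∈ Finset.Icc 1 n,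
      (t ^ 2) ^ (k - 1) / ((2 * k - 1 : ℝ) * ((k - 1)! : ℝ) * ((n + 1 - k)! : ℝ)) with hT'
    set B := ∑ k ∈ Finset.Icc 1 n, (n.choose (k - 1) : ℝ) * (t ^ 2) ^ (k - 1) with hB
    -- ih : D1/D2 * S = (n-1)! * T
    -- goal : (2n)‼/(2n+1)‼ * (S + (2n-1)‼/(2n)‼ * (1+t^2)^n) = n! * (T' + (t^2)^n/((2(n+1)-1)*n!*0!))
    rw [hfac, hfac2]
    have hSval : S = ((2 * n - 1)‼ : ℝ) / ((2 * n - 2)‼ : ℝ) * (((n - 1)! : ℝ) * T) := by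
      field_simp at ih ⊢
      linarith [ih]
    rw [hSval, hbin]
    have hT'val : T' = ((2 * n : ℝ) * ((n - 1)! : ℝ) * T + B) / ((2 * n + 1 : ℝ) * ((n)! : ℝ)) := by
      rw [← hrec]
      field_simp
    rw [hT'val]
    simp only [Nat.factorial_zero, Nat.cast_one, mul_one, Nat.cast_add]
    rw [h2k1]
    field_simp
    ring

theorem two_sums_agree (n : ℕ) (hn : 1 ≤ n) (θ : ℝ) (hθ : θ ∈ Set.Ioo 0 π) :
    (((2 * n - 2)‼ : ℝ) / ((2 * n - 1)‼ : ℝ)) * Real.cos θ *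
        ∑ k ∈ Finset.Icc 1 n,
          (((2 * k - 3)‼ : ℝ) / ((2 * k - 2)‼ : ℝ)) / Real.sin θ ^ (2 * k - 1) =
      ((n - 1)! : ℝ) * ∑ k ∈ Finset.Icc 1 n,
        Real.cot θ ^ (2 * k - 1) / ((2 * k - 1 : ℝ) * ((k - 1)! : ℝ) * ((n - k)! : ℝ)) := by
  obtain ⟨h0, hπ⟩ := hθ
  have hs : Real.sin θ > 0 := Real.sin_pos_of_pos_of_lt_pi h0 hπ
  have hs' : Real.sin θ ≠ 0 := ne_of_gt hs
  have hcot : Real.cot θ = Real.cos θ / Real.sin θ := Real.cot_eq_cos_div_sin θ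
  have hcsq : 1 + Real.cot θ ^ 2 = 1 / Real.sin θ ^ 2 := by
    rw [hcot]
    field_simp
    exact Real.sin_sq_add_cos_sq θ
  have hkey := key (Real.cot θ) n hn
  have hL : Real.cos θ * ∑ k ∈ Finset.Icc 1 n,
        (((2 * k - 3)‼ : ℝ) / ((2 * k - 2)‼ : ℝ)) / Real.sin θ ^ (2 * k - 1)
      = Real.cot θ * ∑ k ∈ Finset.Icc 1 n,
        (((2 * k - 3)‼ : ℝ) / ((2 * k - 2)‼ : ℝ)) * (1 + Real.cot θ ^ 2) ^ (k - 1) := by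
    rw [Finset.mul_sum, Finset.mul_sum]
    refine Finset.sum_congr rfl fun k hk => ?_
    simp only [Finset.mem_Icc] at hk
    have hpow : Real.sin θ ^ (2 * k - 1) = Real.sin θ * (Real.sin θ ^ 2) ^ (k - 1) := by
      rw [← pow_mul, ← _root_.pow_succ']
      congr 1
      omega
    rw [hpow, hcsq, div_pow, one_pow, hcot]
    have hsp : (Real.sin θ ^ 2) ^ (k - 1) ≠ 0 := by positivity
    field_simp
    try ring
    try exact Or.inl trivial
  have hR : ∀ k ∈ Finset.Icc 1 n,
      Real.cot θ ^ (2 * k - 1) / ((2 * k - 1 : ℝ) * ((k - 1)! : ℝ) * ((n - k)! : ℝ))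
      = Real.cot θ * ((Real.cot θ ^ 2) ^ (k - 1) /
          ((2 * k - 1 : ℝ) * ((k - 1)! : ℝ) * ((n - k)! : ℝ))) := by
    intro k hk
    simp only [Finset.mem_Icc] at hk
    rw [← pow_mul, ← mul_div_assoc, ← _root_.pow_succ']
    congr 2
    omega
  rw [mul_assoc, hL, Finset.sum_congr rfl hR, ← Finset.mul_sum,
    mul_left_comm _ (Real.cot θ), mul_left_comm _ (Real.cot θ), hkey]
end

section
/- For a, b, c complex with c not a nonpositive integer and |z| < 1, the Euler transformation holds: ₂F₁(a, b; c; z) = (1-z)^{c-a-b} · ₂F₁(c-a, c-b; c; z). -/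
open Complex PowerSeries

namespace EulerAux

/-- Coefficients of the hypergeometric series. -/
noncomputable def A (a b c : ℂ) (n : ℕ) : ℂ :=
  (ascPochhammer ℂ n).eval a * (ascPochhammer ℂ n).eval b /
    ((ascPochhammer ℂ n).eval c * (n.factorial : ℂ))

lemma poch_ne_zero {c : ℂ} (hc : ∀ k : ℕ, c ≠ -(k : ℂ)) (n : ℕ) :
    (ascPochhammer ℂ n).eval c ≠ 0 := by
  induction n with
  | zero => simp
  | succ n ih =>
    rw [ascPochhammer_succ_eval]
    refine mul_ne_zero ih fun h => hc n ?_
    linear_combination h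

lemma add_nat_ne_zero {c : ℂ} (hc : ∀ k : ℕ, c ≠ -(k : ℂ)) (n : ℕ) : c + (n : ℂ) ≠ 0 :=
  fun h => hc n (by linear_combination h)

lemma A_zero (a b c : ℂ) : A a b c 0 = 1 := by simp [A]

lemma A_rec {c : ℂ} (hc : ∀ k : ℕ, c ≠ -(k : ℂ)) (a b : ℂ) (n : ℕ) :
    ((n : ℂ) + 1) * ((n : ℂ) + c) * A a b c (n + 1)
      = ((n : ℂ) + a) * ((n : ℂ) + b) * A a b c n := by
  have h1 := poch_ne_zero hc n
  have h2 : ((n.factorial : ℂ)) ≠ 0 := Nat.cast_ne_zero.2 n.factorial_ne_zero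
  have h3 : ((n : ℂ) + 1) ≠ 0 := Nat.cast_add_one_ne_zero n
  have h4 : c + (n : ℂ) ≠ 0 := add_nat_ne_zero hc n
  unfold A
  rw [ascPochhammer_succ_eval, ascPochhammer_succ_eval, ascPochhammer_succ_eval,
    Nat.factorial_succ, Nat.cast_mul]
  push_cast
  field_simp
  ring

/-- Division form of the recurrence. -/
lemma A_rec_div {c : ℂ} (hc : ∀ k : ℕ, c ≠ -(k : ℂ)) (a b : ℂ) (n : ℕ) :
    A a b c (n + 1) = (((n : ℂ) + a) * ((n : ℂ) + b)) / (((n : ℂ) + 1) * ((n : ℂ) + c))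
      * A a b c n := by
  have h3 : ((n : ℂ) + 1) ≠ 0 := Nat.cast_add_one_ne_zero n
  have h4 : ((n : ℂ) + c) ≠ 0 := fun h => add_nat_ne_zero hc n (by linear_combination h)
  field_simp
  linear_combination A_rec hc a b n

/-- The hypergeometric differential operator as an operation on formal power series. -/
noncomputable def L (a b c : ℂ) (f : ℂ⟦X⟧) : ℂ⟦X⟧ :=
  X * (1 - X) * (d⁄dX ℂ (d⁄dX ℂ f)) + (C c - (C a + C b + 1) * X) * (d⁄dX ℂ f)
    - C a * C b * f

lemma coeff_L (a b c : ℂ) (f : ℂ⟦X⟧) (n : ℕ) :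
    coeff n (L a b c f)
      = ((n : ℂ) + 1) * ((n : ℂ) + c) * coeff (n + 1) f
        - ((n : ℂ) + a) * ((n : ℂ) + b) * coeff n f := by
  have expand : L a b c f
      = X * (d⁄dX ℂ (d⁄dX ℂ f)) - X * (X * (d⁄dX ℂ (d⁄dX ℂ f)))
        + (C c * (d⁄dX ℂ f) - (C a * (X * d⁄dX ℂ f) + C b * (X * d⁄dX ℂ f)
          + X * d⁄dX ℂ f)) - C a * (C b * f) := by
    unfold L; ring
  have hX0 : ∀ g : ℂ⟦X⟧, coeff 0 (X * g) = 0 := fun g => by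
    rw [coeff_zero_eq_constantCoeff_apply, map_mul, constantCoeff_X, zero_mul]
  rw [expand]
  rcases n with _ | n
  · simp only [map_sub, map_add, hX0, coeff_C_mul, coeff_derivative]
    push_cast
    ring
  · rcases n with _ | n
    · simp only [map_sub, map_add, coeff_succ_X_mul, hX0, coeff_C_mul, coeff_derivative]
      push_cast
      ring
    · simp only [map_sub, map_add, coeff_succ_X_mul, coeff_C_mul, coeff_derivative]
      push_cast
      ring

lemma mk_A_L_eq_zero {c : ℂ} (hc : ∀ k : ℕ, c ≠ -(k : ℂ)) (a b : ℂ) :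
    L a b c (mk (A a b c)) = 0 := by
  ext n
  rw [coeff_L, coeff_mk, coeff_mk, map_zero, A_rec hc a b n]
  ring

/-- Uniqueness of the power-series solution. -/
lemma eq_A_of_L_eq_zero {c : ℂ} (hc : ∀ k : ℕ, c ≠ -(k : ℂ)) (a b : ℂ) {f : ℂ⟦X⟧}
    (hf : L a b c f = 0) (h0 : coeff 0 f = 1) : ∀ n, coeff n f = A a b c n := by
  intro n
  induction n with
  | zero => rw [h0, A_zero]
  | succ n ih =>
    have h := coeff_L a b c f n
    rw [hf, map_zero] at h
    have h3 : ((n : ℂ) + 1) ≠ 0 := Nat.cast_add_one_ne_zero n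
    have h4 : ((n : ℂ) + c) ≠ 0 := fun h => add_nat_ne_zero hc n (by linear_combination h)
    have := A_rec hc a b n
    rw [← ih] at this
    have hmul : ((n : ℂ) + 1) * ((n : ℂ) + c) * coeff (n + 1) f
        = ((n : ℂ) + 1) * ((n : ℂ) + c) * A a b c (n + 1) := by
      linear_combination -h - this
    exact mul_left_cancel₀ (mul_ne_zero h3 h4) hmul

lemma one_sub_X_ne_zero : (1 - X : ℂ⟦X⟧) ≠ 0 := fun h => by
  have := congrArg (constantCoeff) h
  simp at this

lemma L_mul (a b c : ℂ) (u G : ℂ⟦X⟧)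
    (hu : (1 - X) * (d⁄dX ℂ u) = (C a + C b - C c) * u)
    (hG : L (c - a) (c - b) c G = 0) : L a b c (u * G) = 0 := by
  set D := d⁄dX ℂ with hD
  have hu2 : (1 - X) * D (D u) = (C a + C b - C c + 1) * D u := by
    have h := congrArg D hu
    rw [hD] at h
    rw [Derivation.leibniz, Derivation.leibniz] at h
    simp only [smul_eq_mul, map_sub, map_one, derivative_X,
      derivative_C, map_add, Derivation.map_one_eq_zero] at h
    linear_combination h
  have e1 : D (u * G) = u * D G + G * D u := by
    rw [hD, Derivation.leibniz]; simp [smul_eq_mul]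
  have e2 : D (D (u * G)) = u * D (D G) + D G * D u + (G * D (D u) + D u * D G) := by
    rw [e1]
    rw [hD, map_add, Derivation.leibniz, Derivation.leibniz]
    simp [smul_eq_mul]
  have hGexp : X * (1 - X) * (D (D G))
      + (C c - ((C c - C a) + (C c - C b) + 1) * X) * (D G)
      - (C c - C a) * (C c - C b) * G = 0 := by
    have h1 : C (c - a) = C c - C a := by rw [map_sub]
    have h2 : C (c - b) = C c - C b := by rw [map_sub]
    rw [← h1, ← h2]
    exact hG
  have key : (1 - X) * L a b c (u * G) = 0 := by
    unfold L
    rw [e2, e1]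
    linear_combination (1 - X) * u * hGexp
      + ((1 - X) * (C c * G + 2 * X * D G)) * hu
      + (X * (1 - X) * G) * hu2
  rcases mul_eq_zero.1 key with h | h
  · exact absurd h one_sub_X_ne_zero
  · exact h

/-- Binomial series coefficients. -/
noncomputable def B (s : ℂ) (n : ℕ) : ℂ := (ascPochhammer ℂ n).eval s / (n.factorial : ℂ)

lemma B_zero (s : ℂ) : B s 0 = 1 := by simp [B]

lemma B_rec (s : ℂ) (n : ℕ) :
    ((n : ℂ) + 1) * B s (n + 1) = ((n : ℂ) + s) * B s n := by
  have h2 : ((n.factorial : ℂ)) ≠ 0 := Nat.cast_ne_zero.2 n.factorial_ne_zero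
  have h3 : ((n : ℂ) + 1) ≠ 0 := Nat.cast_add_one_ne_zero n
  unfold B
  rw [ascPochhammer_succ_eval, Nat.factorial_succ, Nat.cast_mul]
  push_cast
  field_simp
  ring

lemma mk_B_eq (a b c : ℂ) :
    (1 - X) * (d⁄dX ℂ (mk (B (a + b - c)))) = (C a + C b - C c) * mk (B (a + b - c)) := by
  ext n
  have hX0 : ∀ g : ℂ⟦X⟧, coeff 0 (X * g) = 0 := fun g => by
    rw [coeff_zero_eq_constantCoeff_apply, map_mul, constantCoeff_X, zero_mul]
  have expand : (1 - X) * (d⁄dX ℂ (mk (B (a + b - c))))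
      = d⁄dX ℂ (mk (B (a + b - c))) - X * (d⁄dX ℂ (mk (B (a + b - c)))) := by ring
  have expand2 : (C a + C b - C c) * mk (B (a + b - c))
      = C a * mk (B (a + b - c)) + C b * mk (B (a + b - c))
        - C c * mk (B (a + b - c)) := by ring
  rw [expand, expand2]
  rcases n with _ | n
  · simp only [map_sub, map_add, hX0, coeff_derivative, coeff_C_mul, coeff_mk]
    have := B_rec (a + b - c) 0
    push_cast at this ⊢
    linear_combination this
  · simp only [map_sub, map_add, coeff_succ_X_mul, coeff_derivative, coeff_C_mul, coeff_mk]
    have := B_rec (a + b - c) (n + 1)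
    push_cast at this ⊢
    linear_combination this

/-- The key coefficient identity (equivalent to the Pfaff–Saalschütz evaluation). -/
lemma key_identity {c : ℂ} (hc : ∀ k : ℕ, c ≠ -(k : ℂ)) (a b : ℂ) (n : ℕ) :
    ∑ kl ∈ Finset.HasAntidiagonal.antidiagonal n, B (a + b - c) kl.1 * A (c - a) (c - b) c kl.2
      = A a b c n := by
  have hL : L a b c (mk (B (a + b - c)) * mk (A (c - a) (c - b) c)) = 0 :=
    L_mul a b c _ _ (mk_B_eq a b c) (mk_A_L_eq_zero hc (c - a) (c - b))
  have h0 : coeff 0 (mk (B (a + b - c)) * mk (A (c - a) (c - b) c)) = 1 := by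
    rw [coeff_mul]
    simp [B_zero, A_zero]
  have := eq_A_of_L_eq_zero hc a b hL h0 n
  rw [coeff_mul] at this
  simpa [coeff_mk] using this

open Filter Topology in
lemma summable_norm_of_ratio {t q : ℕ → ℂ} (h : ∀ n, t (n + 1) = q n * t n) {l : ℝ}
    (hq : Tendsto (fun n => ‖q n‖) atTop (nhds l)) (hl : l < 1) :
    Summable fun n => ‖t n‖ := by
  have hr : l < (l + 1) / 2 := by linarith
  have hr1 : (l + 1) / 2 < 1 := by linarith
  refine summable_of_ratio_norm_eventually_le hr1 ?_
  filter_upwards [hq.eventually (eventually_le_nhds hr)] with n hn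
  rw [Real.norm_eq_abs, Real.norm_eq_abs, _root_.abs_of_nonneg (norm_nonneg _),
    _root_.abs_of_nonneg (norm_nonneg _), h n, norm_mul]
  exact mul_le_mul_of_nonneg_right hn (norm_nonneg _)

open Filter Topology in
lemma tendsto_nat_add_div (x : ℂ) {y : ℂ} (hy : ∀ n : ℕ, (n : ℂ) + y ≠ 0) :
    Tendsto (fun n : ℕ => ((n : ℂ) + x) / ((n : ℂ) + y)) atTop (nhds 1) := by
  have h1 : Tendsto (fun n : ℕ => ‖(n : ℂ) + y‖) atTop atTop := by
    apply tendsto_atTop_mono (fun n => ?_)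
      (tendsto_atTop_add_const_right atTop (-‖y‖) tendsto_natCast_atTop_atTop)
    have h := norm_add_le ((n : ℂ) + y) (-y)
    simp only [add_neg_cancel_right, norm_neg, Complex.norm_natCast] at h
    linarith
  have h2 : Tendsto (fun n : ℕ => ((n : ℂ) + y)⁻¹) atTop (nhds 0) := by
    rw [tendsto_zero_iff_norm_tendsto_zero]
    simpa only [norm_inv, Pi.inv_def] using h1.inv_tendsto_atTop
  have hone : Tendsto (fun _ : ℕ => (1 : ℂ)) atTop (nhds 1) := tendsto_const_nhds
  have hxy : Tendsto (fun _ : ℕ => (x - y : ℂ)) atTop (nhds (x - y)) := tendsto_const_nhds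
  have h3 : Tendsto (fun n : ℕ => 1 + (x - y) * ((n : ℂ) + y)⁻¹) atTop (nhds 1) := by
    simpa using hone.add (hxy.mul h2)
  refine h3.congr fun n => ?_
  field_simp [hy n]
  ring

open Filter Topology in
/-- Norm summability of hypergeometric-type terms inside the unit disc. -/
lemma summable_A {c : ℂ} (hc : ∀ k : ℕ, c ≠ -(k : ℂ)) (x y : ℂ) {z : ℂ} (hz : ‖z‖ < 1) :
    Summable fun n => ‖A x y c n * z ^ n‖ := by
  have h1 : ∀ n : ℕ, (n : ℂ) + 1 ≠ 0 := fun n => Nat.cast_add_one_ne_zero n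
  have h4 : ∀ n : ℕ, (n : ℂ) + c ≠ 0 := fun n h =>
    add_nat_ne_zero hc n (by linear_combination h)
  apply summable_norm_of_ratio
    (q := fun n => (((n : ℂ) + x) / ((n : ℂ) + 1)) * ((((n : ℂ) + y) / ((n : ℂ) + c)) * z))
    (l := ‖z‖) _ _ hz
  · intro n
    rw [pow_succ, A_rec_div hc x y n]
    field_simp
  · have hzc : Tendsto (fun _ : ℕ => z) atTop (nhds z) := tendsto_const_nhds
    have := ((tendsto_nat_add_div x h1).mul
      ((tendsto_nat_add_div y h4).mul hzc)).norm
    simpa using this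

lemma B_eq_A {c : ℂ} (hc : ∀ k : ℕ, c ≠ -(k : ℂ)) (s : ℂ) (n : ℕ) :
    B s n = A s c c n := by
  unfold A B
  rw [mul_comm ((ascPochhammer ℂ n).eval c) ((n.factorial : ℂ)),
    mul_div_mul_right _ _ (poch_ne_zero hc n)]

open Filter Topology in
lemma summable_B {s : ℂ} {w : ℂ} (hw : ‖w‖ < 1) :
    Summable fun n => ‖B s n * w ^ n‖ := by
  have h1 : ∀ n : ℕ, (n : ℂ) + 1 ≠ 0 := fun n => Nat.cast_add_one_ne_zero n
  apply summable_norm_of_ratio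
    (q := fun n => (((n : ℂ) + s) / ((n : ℂ) + 1)) * w) (l := ‖w‖) _ _ hw
  · intro n
    have hB : B s (n + 1) = ((n : ℂ) + s) / ((n : ℂ) + 1) * B s n := by
      rw [div_mul_eq_mul_div, eq_div_iff (h1 n)]
      linear_combination B_rec s n
    rw [pow_succ, hB]
    ring
  · have hwc : Tendsto (fun _ : ℕ => w) atTop (nhds w) := tendsto_const_nhds
    have := ((tendsto_nat_add_div s h1).mul hwc).norm
    simpa using this

open Filter Topology in
lemma summable_B_deriv {s : ℂ} {w : ℂ} (hw : ‖w‖ < 1) :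
    Summable fun n : ℕ => ‖((n : ℂ) + 1) * B s (n + 1) * w ^ n‖ := by
  have h1 : ∀ n : ℕ, (n : ℂ) + 1 ≠ 0 := fun n => Nat.cast_add_one_ne_zero n
  apply summable_norm_of_ratio
    (q := fun n => (((n : ℂ) + (1 + s)) / ((n : ℂ) + 1)) * w) (l := ‖w‖) _ _ hw
  · intro n
    have hB2 : ((n : ℂ) + 2) * B s (n + 2) = ((n : ℂ) + 1 + s) * B s (n + 1) := by
      have := B_rec s (n + 1)
      push_cast at this
      linear_combination this
    simp only [show n + 1 + 1 = n + 2 from rfl, pow_succ]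
    push_cast
    rw [div_mul_eq_mul_div, div_mul_eq_mul_div, eq_comm, div_eq_iff (h1 n)]
    linear_combination (-(((n : ℂ) + 1) * (w ^ n * w))) * hB2
  · have hwc : Tendsto (fun _ : ℕ => w) atTop (nhds w) := tendsto_const_nhds
    have := ((tendsto_nat_add_div (1 + s) h1).mul hwc).norm
    simpa using this

open Filter Topology Metric in
lemma tsum_B_eq (s : ℂ) {z : ℂ} (hz : ‖z‖ < 1) :
    ∑' n : ℕ, B s n * z ^ n = (1 - z) ^ (-s) := by
  set r : ℝ := (‖z‖ + 1) / 2 with hr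
  have hzr : ‖z‖ < r := by rw [hr]; linarith
  have hr1 : r < 1 := by rw [hr]; linarith
  have hr0 : 0 < r := lt_of_le_of_lt (norm_nonneg z) hzr
  have hrc : ‖(r : ℂ)‖ < 1 := by
    rwa [Complex.norm_real, Real.norm_eq_abs, _root_.abs_of_pos hr0]
  set u : ℕ → ℝ := fun n => ‖B s n‖ * ((n : ℝ) * r ^ (n - 1)) with hu
  have husum : Summable u := by
    rw [← summable_nat_add_iff 1]
    refine (summable_B_deriv (s := s) hrc).congr fun n => ?_
    rw [hu]
    simp only [Nat.add_sub_cancel]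
    have h1 : ((n : ℂ) + 1) = ((n + 1 : ℕ) : ℂ) := by push_cast; ring
    rw [h1, norm_mul, norm_mul, Complex.norm_natCast, norm_pow, Complex.norm_real,
      Real.norm_eq_abs, _root_.abs_of_pos hr0]
    push_cast
    ring
  set f : ℂ → ℂ := fun ζ => ∑' n : ℕ, B s n * ζ ^ n with hf
  have hderiv : ∀ ζ ∈ ball (0 : ℂ) r,
      HasDerivAt f (∑' n : ℕ, B s n * ((n : ℂ) * ζ ^ (n - 1))) ζ := by
    intro ζ hζ
    refine hasDerivAt_tsum_of_isPreconnected husum isOpen_ball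
      (convex_ball (0 : ℂ) r).isPreconnected
      (fun n y _ => (hasDerivAt_pow n y).const_mul (B s n)) ?_
      (mem_ball_self hr0) ?_ hζ
    · intro n y hy
      rw [mem_ball, dist_zero_right] at hy
      rw [norm_mul, norm_mul, Complex.norm_natCast, norm_pow, hu]
      dsimp only
      gcongr
    · apply summable_of_ne_finset_zero (s := Finset.range 1)
      intro n hn
      rw [Finset.mem_range, Nat.lt_one_iff] at hn
      rw [zero_pow hn, mul_zero]
  have hkey : ∀ ζ ∈ ball (0 : ℂ) r,
      (1 - ζ) * (∑' n : ℕ, B s n * ((n : ℂ) * ζ ^ (n - 1))) = s * f ζ := by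
    intro ζ hζ
    rw [mem_ball, dist_zero_right] at hζ
    have hζ1 : ‖ζ‖ < 1 := hζ.trans hr1
    set T : ℕ → ℂ := fun n => B s n * ((n : ℂ) * ζ ^ (n - 1)) with hT
    have hTshift : Summable fun n : ℕ => T (n + 1) := by
      refine (summable_B_deriv (s := s) hζ1).of_norm.congr fun n => ?_
      rw [hT]
      simp only [Nat.add_sub_cancel]
      push_cast
      ring
    have hTs : Summable T := (summable_nat_add_iff 1).1 hTshift
    have hsum2 : Summable fun n : ℕ => ((n : ℂ) + s) * (B s n * ζ ^ n) := by
      refine hTshift.congr fun n => ?_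
      rw [hT]
      simp only [Nat.add_sub_cancel]
      push_cast
      linear_combination (ζ ^ n) * B_rec s n
    have hsum3 : Summable fun n : ℕ => (n : ℂ) * (B s n * ζ ^ n) := by
      refine (hTs.mul_left ζ).congr fun n => ?_
      rw [hT]
      rcases n with _ | n
      · simp
      · simp only [Nat.add_sub_cancel]
        push_cast
        ring
    have e1 : ∑' n, T n = ∑' n : ℕ, ((n : ℂ) + s) * (B s n * ζ ^ n) := by
      rw [Summable.tsum_eq_zero_add hTs]
      have hT0 : T 0 = 0 := by rw [hT]; simp
      rw [hT0, zero_add]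
      refine tsum_congr fun n => ?_
      rw [hT]
      simp only [Nat.add_sub_cancel]
      push_cast
      linear_combination (ζ ^ n) * B_rec s n
    have e2 : ζ * ∑' n, T n = ∑' n : ℕ, (n : ℂ) * (B s n * ζ ^ n) := by
      rw [← tsum_mul_left]
      refine tsum_congr fun n => ?_
      rw [hT]
      rcases n with _ | n
      · simp
      · simp only [Nat.add_sub_cancel]
        push_cast
        ring
    rw [sub_mul, one_mul, e2, e1, ← Summable.tsum_sub hsum2 hsum3, hf, ← tsum_mul_left]
    refine tsum_congr fun n => ?_
    ring
  have hconst : ∀ ζ ∈ ball (0 : ℂ) r, HasDerivAt (fun w => f w * (1 - w) ^ s) 0 ζ := by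
    intro ζ hζ
    have hζ1 : ‖ζ‖ < 1 := by
      rw [mem_ball, dist_zero_right] at hζ; exact hζ.trans hr1
    have hre : 0 < (1 - ζ).re := by
      have h1 : |ζ.re| ≤ ‖ζ‖ := Complex.abs_re_le_norm ζ
      have h2 := (abs_le.1 (h1.trans hζ1.le)).2
      have h3 : ζ.re < 1 := lt_of_le_of_lt (le_abs_self _) (lt_of_le_of_lt h1 hζ1)
      simp only [Complex.sub_re, Complex.one_re]
      linarith
    have hne : (1 - ζ) ≠ 0 := fun h => by rw [h] at hre; simp at hre
    have hsd : HasDerivAt (fun w : ℂ => (1 - w) ^ s) (s * (1 - ζ) ^ (s - 1) * (-1)) ζ := by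
      have hbase : HasDerivAt (fun w : ℂ => 1 - w) (-1) ζ := (hasDerivAt_id ζ).const_sub 1
      exact hbase.cpow_const (Complex.mem_slitPlane_iff.2 (Or.inl hre))
    have hd := (hderiv ζ hζ).mul hsd
    have hval : (∑' n : ℕ, B s n * ((n : ℂ) * ζ ^ (n - 1))) * (1 - ζ) ^ s
        + f ζ * (s * (1 - ζ) ^ (s - 1) * (-1)) = 0 := by
      have hpow : (1 - ζ) ^ s = (1 - ζ) * (1 - ζ) ^ (s - 1) := by
        conv_lhs => rw [show s = 1 + (s - 1) by ring]
        rw [Complex.cpow_add _ _ hne, Complex.cpow_one]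
      rw [hpow]
      linear_combination ((1 - ζ) ^ (s - 1)) * hkey ζ hζ
    rw [← hval]
    exact hd
  have hdiff : DifferentiableOn ℂ (fun w => f w * (1 - w) ^ s) (ball (0 : ℂ) r) :=
    fun ζ hζ => ((hconst ζ hζ).differentiableAt).differentiableWithinAt
  have hfd : ∀ ζ ∈ ball (0 : ℂ) r,
      fderivWithin ℂ (fun w => f w * (1 - w) ^ s) (ball (0 : ℂ) r) ζ = 0 := by
    intro ζ hζ
    have h2 := (hconst ζ hζ).hasFDerivAt.hasFDerivWithinAt.fderivWithin
      (isOpen_ball.uniqueDiffWithinAt hζ)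
    rw [h2]
    ext
    simp
  have hz_mem : z ∈ ball (0 : ℂ) r := by rw [mem_ball, dist_zero_right]; exact hzr
  have heq := (convex_ball (0 : ℂ) r).is_const_of_fderivWithin_eq_zero hdiff hfd
    hz_mem (mem_ball_self hr0)
  have hf0 : f 0 = 1 := by
    have hfz : f 0 = ∑' n : ℕ, B s n * (0 : ℂ) ^ n := by simp only [hf]
    rw [hfz, tsum_eq_single 0 (fun n hn => by rw [zero_pow hn, mul_zero])]
    simp [B_zero]
  rw [hf0, one_mul] at heq
  have hzre : 0 < (1 - z).re := by
    have h1 : |z.re| ≤ ‖z‖ := Complex.abs_re_le_norm z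
    have h3 : z.re < 1 := lt_of_le_of_lt (le_abs_self _) (lt_of_le_of_lt h1 hz)
    simp only [Complex.sub_re, Complex.one_re]
    linarith
  have hzne : (1 - z) ≠ 0 := fun h => by rw [h] at hzre; simp at hzre
  have hsz : ((1 : ℂ) - 0 : ℂ) ^ s = 1 := by
    rw [sub_zero, Complex.one_cpow]
  rw [hsz] at heq
  have hpne : (1 - z) ^ s ≠ 0 := by
    rw [Ne, Complex.cpow_eq_zero_iff]
    rintro ⟨h, -⟩
    exact hzne h
  rw [Complex.cpow_neg, ← one_div]
  exact eq_div_of_mul_eq hpne heq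

end EulerAux

open Complex

/-- The Gauss hypergeometric series `₂F₁(a, b; c; z)` over the complex numbers. -/
noncomputable def hyp2F1 (a b c z : ℂ) : ℂ :=
  ∑' n : ℕ, ((ascPochhammer ℂ n).eval a * (ascPochhammer ℂ n).eval b /
    ((ascPochhammer ℂ n).eval c * (n.factorial : ℂ))) * z ^ n

theorem euler_transformation (a b c z : ℂ) (hc : ∀ k : ℕ, c ≠ -(k : ℂ)) (hz : ‖z‖ < 1) :
    hyp2F1 a b c z = (1 - z) ^ (c - a - b) * hyp2F1 (c - a) (c - b) c z := by
  have hsum1 : Summable fun n : ℕ => ‖EulerAux.B (a + b - c) n * z ^ n‖ :=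
    EulerAux.summable_B hz
  have hsum2 : Summable fun n : ℕ => ‖EulerAux.A (c - a) (c - b) c n * z ^ n‖ :=
    EulerAux.summable_A hc (c - a) (c - b) hz
  have hprod := tsum_mul_tsum_eq_tsum_sum_antidiagonal_of_summable_norm hsum1 hsum2
  have hbin : ∑' n : ℕ, EulerAux.B (a + b - c) n * z ^ n = (1 - z) ^ (-(a + b - c)) :=
    EulerAux.tsum_B_eq (a + b - c) hz
  have h1 : hyp2F1 a b c z = ∑' n : ℕ, EulerAux.A a b c n * z ^ n := rfl
  have h2 : hyp2F1 (c - a) (c - b) c z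
      = ∑' n : ℕ, EulerAux.A (c - a) (c - b) c n * z ^ n := rfl
  rw [h1, h2, show c - a - b = -(a + b - c) by ring, ← hbin, hprod]
  refine tsum_congr fun n => ?_
  rw [← EulerAux.key_identity hc a b n, Finset.sum_mul]
  refine Finset.sum_congr rfl fun kl hkl => ?_
  rw [Finset.HasAntidiagonal.mem_antidiagonal] at hkl
  rw [← hkl, pow_add]
  ring
end
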